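/- Let V ⊆ R = ℝ[x₁,…,xₙ] be a finite-dimensional vector space and I : V → ℝ a linear form. Suppose there exist a finite set B of monomials connected to 1 with V ⊆ ⟨B⁺·B⁺⟩ and a linear form σ on ⟨B⁺·B⁺⟩ such that σ(v) = I(v) for all v ∈ V, the bilinear form H_σ^{B,B} is positive semidefinite, and rank H_σ^{B,B} = rank H_σ^{B⁺,B⁺} = |B| = r. Then there exist weights wᵢ > 0 and points ζᵢ ∈ ℝⁿ, i = 1,…,r, such that I(v) = ∑_{i=1}^r wᵢ v(ζᵢ) for all v ∈ V. -/

import Mathlib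

open MvPolynomial Matrix

/-- A set `B` of monomials (identified with their exponent multi-indices) is
connected to 1 if it contains `1 = x^0` and every `m ≠ 1` in `B` is `xᵢ·m'`
for some variable `xᵢ` and some `m' ∈ B`. -/
def connectedTo1 {n : ℕ} (B : Finset (Fin n →₀ ℕ)) : Prop :=
  (0 : Fin n →₀ ℕ) ∈ B ∧ ∀ α ∈ B, α ≠ 0 → ∃ i : Fin n, ∃ β ∈ B, α = β + Finsupp.single i 1

/-- `B⁺ = B ∪ x₁B ∪ ⋯ ∪ xₙB` on the level of exponents. -/
noncomputable def plusSet {n : ℕ} (B : Finset (Fin n →₀ ℕ)) : Finset (Fin n →₀ ℕ) :=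
  B ∪ Finset.univ.biUnion fun i : Fin n => B.image (· + Finsupp.single i 1)

/-- The product set `B·B' = {m·m' : m ∈ B, m' ∈ B'}` on the level of exponents. -/
noncomputable def mulSet {n : ℕ} (B B' : Finset (Fin n →₀ ℕ)) : Finset (Fin n →₀ ℕ) :=
  (B ×ˢ B').image fun p => p.1 + p.2

/-- The span `⟨B⟩` of a set of monomials. -/
noncomputable def spanMon {n : ℕ} (B : Finset (Fin n →₀ ℕ)) :
    Submodule ℝ (MvPolynomial (Fin n) ℝ) :=
  Submodule.span ℝ ((fun α => (monomial α (1 : ℝ))) '' (B : Set (Fin n →₀ ℕ)))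

/-- The (truncated) Hankel matrix `[σ(m·m')]_{m ∈ B, m' ∈ B'}`. -/
noncomputable def hMat {n : ℕ} (σ : Module.Dual ℝ (MvPolynomial (Fin n) ℝ))
    (B B' : Finset (Fin n →₀ ℕ)) : Matrix ↥B ↥B' ℝ :=
  Matrix.of fun m m' => σ (monomial ((m : Fin n →₀ ℕ) + (m' : Fin n →₀ ℕ)) 1)

set_option linter.unusedSectionVars false
section GenHelpers
variable {n : ℕ} {ι : Type*} [Fintype ι] [DecidableEq ι]

private theorem sum_dotProduct' {γ : Type*} (s : Finset γ) (v : γ → ι → ℝ) (w : ι → ℝ) :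
    (∑ x ∈ s, v x) ⬝ᵥ w = ∑ x ∈ s, v x ⬝ᵥ w := by
  simp only [dotProduct, Finset.sum_apply, Finset.sum_mul]
  exact Finset.sum_comm

private theorem dotProduct_sum' {γ : Type*} (s : Finset γ) (w : ι → ℝ) (v : γ → ι → ℝ) :
    w ⬝ᵥ (∑ x ∈ s, v x) = ∑ x ∈ s, w ⬝ᵥ v x := by
  simp only [dotProduct, Finset.sum_apply, Finset.mul_sum]
  exact Finset.sum_comm

private theorem bilexp {κ : Type*} (H : Matrix ι ι ℝ) (s : Finset (κ → ℝ))
    [DecidableEq (κ → ℝ)] (u : (κ → ℝ) → (ι → ℝ)) (a b : (κ → ℝ) → ℝ)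
    (horth : ∀ χ ∈ s, ∀ χ' ∈ s, χ ≠ χ' → u χ ⬝ᵥ H *ᵥ u χ' = 0) :
    (∑ χ ∈ s, a χ • u χ) ⬝ᵥ H *ᵥ (∑ χ ∈ s, b χ • u χ)
      = ∑ χ ∈ s, a χ * b χ * (u χ ⬝ᵥ H *ᵥ u χ) := by
  have h1 : H *ᵥ (∑ χ ∈ s, b χ • u χ) = ∑ χ ∈ s, b χ • (H *ᵥ u χ) := by
    show H.mulVecLin _ = _
    rw [map_sum]
    exact Finset.sum_congr rfl fun χ _ => by rw [LinearMap.map_smul]; rfl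
  rw [h1, sum_dotProduct']
  apply Finset.sum_congr rfl
  intro χ hχ
  rw [dotProduct_sum']
  rw [Finset.sum_eq_single χ]
  · rw [smul_dotProduct, dotProduct_smul]
    simp only [smul_eq_mul]
    ring
  · intro χ' hχ' hne
    rw [smul_dotProduct, dotProduct_smul]
    simp only [smul_eq_mul]
    rw [horth χ hχ χ' hχ' (Ne.symm hne)]
    ring
  · intro h; exact absurd hχ h

private theorem lindep {κ : Type*} (H : Matrix ι ι ℝ) (s : Finset (κ → ℝ))
    [DecidableEq (κ → ℝ)] (u : (κ → ℝ) → (ι → ℝ))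
    (horth : ∀ χ ∈ s, ∀ χ' ∈ s, χ ≠ χ' → u χ ⬝ᵥ H *ᵥ u χ' = 0)
    (hpd : ∀ v : ι → ℝ, v ≠ 0 → 0 < v ⬝ᵥ H *ᵥ v)
    (hne : ∀ χ ∈ s, u χ ≠ 0) :
    s.card ≤ Fintype.card ι := by
  have hli : LinearIndependent ℝ (fun χ : ↥s => u ↑χ) := by
    rw [Fintype.linearIndependent_iff]
    intro g hg
    by_contra hcon
    push_neg at hcon
    obtain ⟨χ0, hχ0⟩ := hcon
    have h2 : (∑ χ : ↥s, g χ • u ↑χ) ⬝ᵥ H *ᵥ u ↑χ0 = g χ0 * (u ↑χ0 ⬝ᵥ H *ᵥ u ↑χ0) := by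
      rw [sum_dotProduct' Finset.univ (fun χ : ↥s => g χ • u ↑χ)]
      rw [Finset.sum_eq_single χ0]
      · rw [smul_dotProduct]; simp only [smul_eq_mul]
      · intro χ' _ hne'
        rw [smul_dotProduct]
        simp only [smul_eq_mul]
        rw [horth _ (χ'.2) _ (χ0.2) (fun hh => hne' (Subtype.ext hh))]
        ring
      · simp
    rw [hg, zero_dotProduct] at h2
    have h3 := hpd (u ↑χ0) (hne _ χ0.2)
    have h4 : g χ0 * (u ↑χ0 ⬝ᵥ H *ᵥ u ↑χ0) ≠ 0 := mul_ne_zero hχ0 (ne_of_gt h3)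
    exact h4 h2.symm
  have := hli.fintype_card_le_finrank
  simpa [Fintype.card_coe] using this

private theorem rankbound {κ : Type*} (H : Matrix ι ι ℝ) (s : Finset (κ → ℝ))
    [DecidableEq (κ → ℝ)] (F : Matrix ↥s ι ℝ)
    (hfact : H = Fᵀ * F) : H.rank ≤ s.card := by
  rw [hfact]
  calc (Fᵀ * F).rank ≤ Fᵀ.rank := Matrix.rank_mul_le_left _ _
    _ ≤ s.card := by
        have := Matrix.rank_le_card_width Fᵀ
        simpa [Fintype.card_coe] using this

private theorem symB (H Ni : Matrix ι ι ℝ) (hHsym : Hᵀ = H) (hHNsym : (H * Ni)ᵀ = H * Ni)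
    (u v : ι → ℝ) : (Ni *ᵥ u) ⬝ᵥ H *ᵥ v = u ⬝ᵥ H *ᵥ (Ni *ᵥ v) := by
  have hNH : Niᵀ * H = H * Ni := by
    calc Niᵀ * H = Niᵀ * Hᵀ := by rw [hHsym]
      _ = (H * Ni)ᵀ := by rw [Matrix.transpose_mul]
      _ = H * Ni := hHNsym
  rw [Matrix.mulVec_mulVec, ← Matrix.vecMul_transpose, ← Matrix.dotProduct_mulVec,
    Matrix.mulVec_mulVec, hNH]

private theorem orthog (H : Matrix ι ι ℝ) (N : Fin n → Matrix ι ι ℝ)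
    (hsymB : ∀ (i : Fin n) (u v : ι → ℝ), (N i *ᵥ u) ⬝ᵥ H *ᵥ v = u ⬝ᵥ H *ᵥ (N i *ᵥ v))
    (u u' : ι → ℝ) (χ χ' : Fin n → ℝ)
    (heig : ∀ i, N i *ᵥ u = χ i • u) (heig' : ∀ i, N i *ᵥ u' = χ' i • u')
    (hne : χ ≠ χ') : u ⬝ᵥ H *ᵥ u' = 0 := by
  obtain ⟨i, hi⟩ := Function.ne_iff.mp hne
  have h1 : (N i *ᵥ u) ⬝ᵥ H *ᵥ u' = χ i * (u ⬝ᵥ H *ᵥ u') := by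
    rw [heig i, smul_dotProduct]; rfl
  have h2 : u ⬝ᵥ H *ᵥ (N i *ᵥ u') = χ' i * (u ⬝ᵥ H *ᵥ u') := by
    rw [heig' i, Matrix.mulVec_smul, dotProduct_smul]; rfl
  have h3 := hsymB i u u'
  rw [h1, h2] at h3
  by_contra hcon
  exact hi (mul_right_cancel₀ hcon h3)

private theorem factorH {κ : Type*} (H : Matrix ι ι ℝ) (s : Finset (κ → ℝ)) (W : (κ → ℝ) → ℝ)
    (hW : ∀ χ ∈ s, 0 ≤ W χ) (ppow : (κ → ℝ) → ι → ℝ)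
    (hform : ∀ a b : ι, H a b = ∑ χ ∈ s, ppow χ a * ppow χ b * W χ) :
    H = (Matrix.of fun (χ : ↥s) a => Real.sqrt (W ↑χ) * ppow (↑χ) a)ᵀ
        * (Matrix.of fun (χ : ↥s) a => Real.sqrt (W ↑χ) * ppow (↑χ) a) := by
  ext a b
  rw [hform a b, Matrix.mul_apply]
  rw [← Finset.sum_coe_sort s (fun χ => ppow χ a * ppow χ b * W χ)]
  apply Finset.sum_congr rfl
  intro χ _
  simp only [Matrix.transpose_apply, Matrix.of_apply]
  have h0 := Real.mul_self_sqrt (hW ↑χ χ.2)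
  calc ppow (↑χ) a * ppow (↑χ) b * W ↑χ
      = ppow (↑χ) a * ppow (↑χ) b * (Real.sqrt (W ↑χ) * Real.sqrt (W ↑χ)) := by rw [h0]
    _ = _ := by ring

private theorem evalmono (ζ : Fin n → ℝ) (γ : Fin n →₀ ℕ) :
    eval ζ (monomial γ (1:ℝ)) = ∏ i, ζ i ^ γ i := by
  rw [eval_monomial, one_mul]
  exact Finsupp.prod_fintype _ _ fun i => pow_zero _

private theorem powsplit (ζ : Fin n → ℝ) (α β : Fin n →₀ ℕ) :
    (∏ i, ζ i ^ (α + β : Fin n →₀ ℕ) i) = (∏ i, ζ i ^ α i) * ∏ i, ζ i ^ β i := by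
  rw [← Finset.prod_mul_distrib]
  apply Finset.prod_congr rfl
  intro j _
  rw [Finsupp.add_apply, pow_add]

private theorem eigdecomp (H : Matrix ι ι ℝ) (hPD : H.PosDef)
    (N : Fin n → Matrix ι ι ℝ) (hHsym : Hᵀ = H)
    (hHNsym : ∀ i, (H * N i)ᵀ = H * N i)
    (hNcomm : ∀ i k, N i * N k = N k * N i) (e0 : ι → ℝ) :
    ∃ f : (Fin n → ℝ) →₀ (ι → ℝ),
      (∀ χ i, N i *ᵥ f χ = χ i • f χ) ∧ (f.sum fun _ x => x) = e0 := by
  letI iN : NormedAddCommGroup (ι → ℝ) := H.toNormedAddCommGroup hPD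
  letI iP : @InnerProductSpace ℝ (ι → ℝ) _ iN.toSeminormedAddCommGroup :=
    H.toInnerProductSpace hPD.posSemidef
  set T : Fin n → ((ι → ℝ) →ₗ[ℝ] (ι → ℝ)) := fun i => (N i).mulVecLin with hT
  have hsymm : ∀ i, @LinearMap.IsSymmetric ℝ (ι → ℝ) _ iN.toSeminormedAddCommGroup iP (T i) := by
    intro i x y
    show (H *ᵥ y) ⬝ᵥ (star (N i *ᵥ x)) = (H *ᵥ (N i *ᵥ y)) ⬝ᵥ (star x)
    rw [star_trivial, star_trivial, dotProduct_comm (H *ᵥ y), dotProduct_comm (H *ᵥ (N i *ᵥ y))]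
    exact symB H (N i) hHsym (hHNsym i) x y
  have hcommT : Pairwise (Function.onFun Commute T) := by
    intro i k _
    show T i * T k = T k * T i
    have : ∀ i k, T i * T k = (N i * N k).mulVecLin := by
      intro i k
      rw [hT]
      simp only [Matrix.mulVecLin_mul]
      rfl
    rw [this, this, hNcomm]
  have htop := @LinearMap.IsSymmetric.iSup_iInf_eq_top_of_commute ℝ (ι → ℝ) _ iN iP _ _ T
    hsymm hcommT
  have he0 : e0 ∈ (⊤ : Submodule ℝ (ι → ℝ)) := Submodule.mem_top
  rw [← htop] at he0
  obtain ⟨f, hf1, hf2⟩ := (Submodule.mem_iSup_iff_exists_finsupp _ _).mp he0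
  refine ⟨f, fun χ i => ?_, hf2⟩
  have := (Submodule.mem_iInf _).mp (hf1 χ) i
  rw [Module.End.mem_eigenspace_iff] at this
  exact this

end GenHelpers

section BHelpers
variable {n : ℕ} {B : Finset (Fin n →₀ ℕ)} {σ : Module.Dual ℝ (MvPolynomial (Fin n) ℝ)}
  (c : ↥(plusSet B) → ↥B → ℝ)
  (hc : ∀ (β α : ↥(plusSet B)),
    σ (monomial ((α : Fin n →₀ ℕ) + (β : Fin n →₀ ℕ)) 1)
      = ∑ b : ↥B, c β b * σ (monomial ((α : Fin n →₀ ℕ) + (b : Fin n →₀ ℕ)) 1))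
  (huniq : ∀ u v : ↥B → ℝ, hMat σ B B *ᵥ u = hMat σ B B *ᵥ v → u = v)

theorem memBp' (i : Fin n) (b : ↥B) : (b : Fin n →₀ ℕ) + Finsupp.single i 1 ∈ plusSet B := by
  apply Finset.mem_union_right
  exact Finset.mem_biUnion.mpr ⟨i, Finset.mem_univ i, Finset.mem_image.mpr ⟨b, b.2, rfl⟩⟩

theorem memB' (b : ↥B) : (b : Fin n →₀ ℕ) ∈ plusSet B := Finset.mem_union_left _ b.2

include hc in
theorem hHmul' (β : ↥(plusSet B)) :
    hMat σ B B *ᵥ c β = fun a : ↥B => σ (monomial ((a : Fin n →₀ ℕ) + (β : Fin n →₀ ℕ)) 1) := by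
  funext a
  have := hc β ⟨a, memB' a⟩
  simp only [Matrix.mulVec, dotProduct, hMat, Matrix.of_apply]
  rw [this]
  apply Finset.sum_congr rfl; intro b _; ring

include hc huniq in
theorem hcsingle' (b : ↥B) (β : ↥(plusSet B)) (h : (β : Fin n →₀ ℕ) = (b : Fin n →₀ ℕ)) :
    c β = Pi.single b 1 := by
  apply huniq
  rw [hHmul' c hc, Matrix.mulVec_single_one]
  funext a
  simp [hMat, h]

/-- the multiplication operator matrices -/
noncomputable def NN (c : ↥(plusSet B) → ↥B → ℝ) (i : Fin n) : Matrix ↥B ↥B ℝ :=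
  Matrix.of fun a b => c ⟨(b : Fin n →₀ ℕ) + Finsupp.single i 1, memBp' i b⟩ a

theorem hNcol' (i : Fin n) (b : ↥B) :
    NN c i *ᵥ Pi.single b 1 = c ⟨(b : Fin n →₀ ℕ) + Finsupp.single i 1, memBp' i b⟩ := by
  rw [Matrix.mulVec_single_one]
  rfl

include hc in
theorem hHN' (i : Fin n) : hMat σ B B * NN c i
    = Matrix.of fun a b : ↥B =>
        σ (monomial ((a : Fin n →₀ ℕ) + (b : Fin n →₀ ℕ) + Finsupp.single i 1) 1) := by
  ext a b
  have h1 := congrFun (hHmul' c hc ⟨(b : Fin n →₀ ℕ) + Finsupp.single i 1, memBp' i b⟩) a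
  simp only [Matrix.mul_apply, Matrix.of_apply, NN]
  simp only [Matrix.mulVec, dotProduct, hMat, Matrix.of_apply] at h1 ⊢
  rw [h1, ← add_assoc]

include hc huniq in
theorem hNcomm' (i k : Fin n) : NN c i * NN c k = NN c k * NN c i := by
  have key : ∀ i k : Fin n, hMat σ B B * (NN c i * NN c k)
      = Matrix.of fun a b : ↥B => σ (monomial ((a : Fin n →₀ ℕ) + (b : Fin n →₀ ℕ)
          + Finsupp.single i 1 + Finsupp.single k 1) 1) := by
    intro i k
    rw [← Matrix.mul_assoc, hHN' c hc i]
    ext a b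
    simp only [Matrix.mul_apply, Matrix.of_apply, NN]
    have h2 := hc ⟨(b : Fin n →₀ ℕ) + Finsupp.single k 1, memBp' k b⟩
      ⟨(a : Fin n →₀ ℕ) + Finsupp.single i 1, memBp' i a⟩
    simp only at h2
    calc ∑ x : ↥B, σ (monomial ((a : Fin n →₀ ℕ) + (x : Fin n →₀ ℕ) + Finsupp.single i 1) 1)
          * c ⟨(b : Fin n →₀ ℕ) + Finsupp.single k 1, memBp' k b⟩ x
        = ∑ x : ↥B, c ⟨(b : Fin n →₀ ℕ) + Finsupp.single k 1, memBp' k b⟩ x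
          * σ (monomial (((a : Fin n →₀ ℕ) + Finsupp.single i 1) + (x : Fin n →₀ ℕ)) 1) := by
          apply Finset.sum_congr rfl; intro x _
          rw [mul_comm]
          congr 2
          abel
      _ = σ (monomial (((a : Fin n →₀ ℕ) + Finsupp.single i 1)
            + ((b : Fin n →₀ ℕ) + Finsupp.single k 1)) 1) := h2.symm
      _ = σ (monomial ((a : Fin n →₀ ℕ) + (b : Fin n →₀ ℕ)
            + Finsupp.single i 1 + Finsupp.single k 1) 1) := by congr 1; abel
  have h3 : hMat σ B B * (NN c i * NN c k)
      = hMat σ B B * (NN c k * NN c i) := by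
    rw [key i k, key k i]
    ext a b
    simp only [Matrix.of_apply]
    congr 2
    abel
  ext a b
  have h4 : ∀ M : Matrix ↥B ↥B ℝ, (hMat σ B B * M) *ᵥ Pi.single b 1
      = hMat σ B B *ᵥ (M *ᵥ Pi.single b 1) := fun M => (Matrix.mulVec_mulVec _ _ _).symm
  have h5 := huniq _ _ ((h4 _).symm.trans ((congrArg (· *ᵥ Pi.single b 1) h3).trans (h4 _)))
  have h6 := congrFun h5 a
  simpa [Matrix.mulVec_single_one] using h6

variable (hB : connectedTo1 B)
  (f : (Fin n → ℝ) →₀ (↥B → ℝ))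
  (heig : ∀ χ i, NN c i *ᵥ f χ = χ i • f χ)
  (hsum : (f.sum fun _ x => x) = Pi.single (⟨0, hB.1⟩ : ↥B) 1)

include hB hc huniq heig hsum in
theorem expandc' : ∀ α : ↥(plusSet B),
    c α = ∑ χ ∈ f.support, (∏ i, χ i ^ (α : Fin n →₀ ℕ) i) • f χ := by
  classical
  have hdegstep : ∀ (γ : Fin n →₀ ℕ) (i : Fin n),
      (∑ j, (γ + Finsupp.single i 1 : Fin n →₀ ℕ) j) = (∑ j, γ j) + 1 := by
    intro γ i
    simp only [Finsupp.add_apply, Finset.sum_add_distrib]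
    congr 1
    simp [Finsupp.single_apply]
  have hstep : ∀ (i : Fin n) (b : ↥B) (β : ↥(plusSet B)),
      (β : Fin n →₀ ℕ) = (b : Fin n →₀ ℕ) + Finsupp.single i 1 →
      c β = NN c i *ᵥ c ⟨(b : Fin n →₀ ℕ), memB' b⟩ := by
    intro i b β h
    rw [hcsingle' c hc huniq b ⟨(b : Fin n →₀ ℕ), memB' b⟩ rfl, hNcol' c i b]
    exact congrArg c (Subtype.ext h)
  have main : ∀ (d : ℕ) (α : ↥(plusSet B)), (∑ j, (α : Fin n →₀ ℕ) j) = d →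
      c α = ∑ χ ∈ f.support, (∏ i, χ i ^ (α : Fin n →₀ ℕ) i) • f χ := by
    intro d
    induction d using Nat.strong_induction_on with
    | _ d ih =>
      intro α hd
      by_cases h0 : (α : Fin n →₀ ℕ) = 0
      · rw [hcsingle' c hc huniq ⟨0, hB.1⟩ α (by simpa using h0), ← hsum]
        rw [Finsupp.sum]
        apply Finset.sum_congr rfl
        intro χ _
        rw [h0]
        simp
      · have hdec : ∃ (i : Fin n) (b : Fin n →₀ ℕ), b ∈ B ∧
            (α : Fin n →₀ ℕ) = b + Finsupp.single i 1 := by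
          have hα := α.2
          simp only [plusSet, Finset.mem_union, Finset.mem_biUnion, Finset.mem_image] at hα
          rcases hα with hα | ⟨i, _, b, hbB, hugh⟩
          · obtain ⟨i, β', hβ', hcomp⟩ := hB.2 _ hα h0
            exact ⟨i, β', hβ', hcomp⟩
          · exact ⟨i, b, hbB, hugh.symm⟩
        obtain ⟨i, b, hbB, hab⟩ := hdec
        set bb : ↥B := ⟨b, hbB⟩
        have hdd : d = (∑ j, b j) + 1 := by
          have h7 := hdegstep b i
          rw [← hab, hd] at h7
          exact h7
        have hd' : (∑ j, (bb : Fin n →₀ ℕ) j) = d - 1 := by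
          show (∑ j, b j) = d - 1
          omega
        have ihb := ih (d-1) (by omega) ⟨(bb : Fin n →₀ ℕ), memB' bb⟩ hd'
        rw [hstep i bb α hab, ihb]
        have hlin : NN c i *ᵥ (∑ χ ∈ f.support,
              (∏ j, χ j ^ ((⟨(bb : Fin n →₀ ℕ), memB' bb⟩ : ↥(plusSet B)) : Fin n →₀ ℕ) j) • f χ)
            = ∑ χ ∈ f.support,
              (∏ j, χ j ^ ((⟨(bb : Fin n →₀ ℕ), memB' bb⟩ : ↥(plusSet B)) : Fin n →₀ ℕ) j)
                • (NN c i *ᵥ f χ) := by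
          show (NN c i).mulVecLin _ = _
          rw [map_sum]
          apply Finset.sum_congr rfl
          intro χ _
          rw [LinearMap.map_smul]
          rfl
        rw [hlin]
        apply Finset.sum_congr rfl
        intro χ _
        rw [heig χ i, smul_smul]
        congr 1
        show (∏ j, χ j ^ b j) * χ i = ∏ j, χ j ^ (α : Fin n →₀ ℕ) j
        rw [hab]
        simp only [Finsupp.add_apply]
        refine Eq.symm ?_
        calc (∏ j, χ j ^ (b j + (Finsupp.single i 1 : Fin n →₀ ℕ) j))
            = ∏ j, (χ j ^ b j * χ j ^ (Finsupp.single i 1 : Fin n →₀ ℕ) j) := by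
              apply Finset.prod_congr rfl; intro j _; rw [pow_add]
          _ = (∏ j, χ j ^ b j) * ∏ j, χ j ^ (Finsupp.single i 1 : Fin n →₀ ℕ) j :=
              Finset.prod_mul_distrib
          _ = (∏ j, χ j ^ b j) * χ i := by
              congr 1
              simp [Finsupp.single_apply, pow_ite]
  intro α
  exact main _ α rfl

end BHelpers

private theorem key (n : ℕ) (B : Finset (Fin n →₀ ℕ)) (hB : connectedTo1 B)
    (σ : Module.Dual ℝ (MvPolynomial (Fin n) ℝ))
    (hpsd : ∀ p ∈ spanMon B, 0 ≤ σ (p * p))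
    (hrk1 : (hMat σ B B).rank = B.card)
    (hrk2 : (hMat σ (plusSet B) (plusSet B)).rank = B.card) :
    ∃ (w : Fin B.card → ℝ) (ζ : Fin B.card → (Fin n → ℝ)), (∀ i, 0 < w i) ∧
      ∀ γ ∈ mulSet (plusSet B) (plusSet B),
        σ (monomial γ 1) = ∑ i, w i * MvPolynomial.eval (ζ i) (monomial γ (1:ℝ)) := by
  classical
  -- PSD of the Hankel form
  have hquad : ∀ x : ↥B → ℝ, x ⬝ᵥ (hMat σ B B) *ᵥ x =
      σ ((∑ b : ↥B, x b • monomial (b : Fin n →₀ ℕ) (1:ℝ)) *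
         (∑ b : ↥B, x b • monomial (b : Fin n →₀ ℕ) (1:ℝ))) := by
    intro x
    rw [Finset.sum_mul_sum]
    rw [map_sum]
    simp only [map_sum, smul_mul_smul_comm, monomial_mul, mul_one, LinearMap.map_smul,
      smul_eq_mul]
    simp only [dotProduct, Matrix.mulVec, hMat, Matrix.of_apply, dotProduct, Finset.mul_sum]
    apply Finset.sum_congr rfl; intro a _
    apply Finset.sum_congr rfl; intro b _
    ring
  have hpsd' : ∀ x : ↥B → ℝ, 0 ≤ x ⬝ᵥ (hMat σ B B) *ᵥ x := by
    intro x
    rw [hquad]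
    apply hpsd
    exact Submodule.sum_mem _ fun b _ => Submodule.smul_mem _ _
      (Submodule.subset_span ⟨b, b.2, rfl⟩)
  have hHsymm : (hMat σ B B).IsHermitian := by
    ext a b
    simp only [conjTranspose_apply, star_trivial, hMat, of_apply, add_comm]
  have hHsymT : (hMat σ B B)ᵀ = hMat σ B B := by
    ext a b
    simp only [transpose_apply, hMat, of_apply, add_comm]
  -- injectivity
  have hinj : Function.Injective (hMat σ B B).mulVecLin := by
    have hsurj : Function.Surjective (hMat σ B B).mulVecLin := by
      rw [← LinearMap.range_eq_top]
      apply Submodule.eq_top_of_finrank_eq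
      rw [← Matrix.rank, hrk1]
      simp [Fintype.card_coe]
    exact (LinearMap.injective_iff_surjective_of_finrank_eq_finrank rfl).mpr hsurj
  have huniq : ∀ u v : ↥B → ℝ, hMat σ B B *ᵥ u = hMat σ B B *ᵥ v → u = v :=
    fun u v h => hinj h
  -- positive definiteness
  have hPD : (hMat σ B B).PosDef := by
    refine Matrix.PosDef.of_dotProduct_mulVec_pos hHsymm (fun x hx => ?_)
    rw [star_trivial]
    rcases lt_or_eq_of_le (hpsd' x) with h | h
    · exact h
    · exfalso
      have h0 : hMat σ B B *ᵥ x = 0 := by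
        have := (Matrix.PosSemidef.dotProduct_mulVec_zero_iff (Matrix.PosSemidef.of_dotProduct_mulVec_nonneg hHsymm fun y => by
          rw [star_trivial]; exact hpsd' y) x)
        rw [star_trivial] at this
        exact this.mp h.symm
      exact hx (hinj (by simpa [Matrix.mulVecLin] using h0))
  have hpdbil : ∀ v : ↥B → ℝ, v ≠ 0 → 0 < v ⬝ᵥ hMat σ B B *ᵥ v := by
    intro v hv
    have := hPD.dotProduct_mulVec_pos hv
    rwa [star_trivial] at this
  -- flatness: column relations
  have hcex : ∀ β : ↥(plusSet B), ∃ cc : ↥B → ℝ, ∀ α : ↥(plusSet B),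
      σ (monomial ((α : Fin n →₀ ℕ) + (β : Fin n →₀ ℕ)) 1)
        = ∑ b : ↥B, cc b * σ (monomial ((α : Fin n →₀ ℕ) + (b : Fin n →₀ ℕ)) 1) := by
    have hsub : B ⊆ plusSet B := Finset.subset_union_left
    set Bp := plusSet B
    set col : ↥Bp → (↥Bp → ℝ) :=
      fun β α => σ (monomial ((α : Fin n →₀ ℕ) + (β : Fin n →₀ ℕ)) 1) with hcol
    set j : ↥B → ↥Bp := fun b => ⟨b, hsub b.2⟩ with hj
    have hfull : Submodule.span ℝ (Set.range col)
        = LinearMap.range (hMat σ Bp Bp).mulVecLin := by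
      rw [Matrix.range_mulVecLin]
      congr 1
    set S := Submodule.span ℝ (Set.range (col ∘ j)) with hS
    have hle : S ≤ Submodule.span ℝ (Set.range col) :=
      Submodule.span_mono (Set.range_comp_subset_range _ _)
    set π : (↥Bp → ℝ) →ₗ[ℝ] (↥B → ℝ) := LinearMap.funLeft ℝ ℝ j with hπ
    have hmap : S.map π = LinearMap.range (hMat σ B B).mulVecLin := by
      rw [hS, Submodule.map_span, ← Set.range_comp, Matrix.range_mulVecLin]
      congr 1
    have hrg : Module.finrank ℝ S = B.card := by
      have h1 : Module.finrank ℝ (S.map π) = B.card := by rw [hmap, ← Matrix.rank, hrk1]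
      have h2 : Module.finrank ℝ (S.map π) ≤ Module.finrank ℝ S := Submodule.finrank_map_le π S
      have h3 : Module.finrank ℝ S ≤ B.card := by
        rw [← hrk2]
        calc Module.finrank ℝ S ≤ Module.finrank ℝ (Submodule.span ℝ (Set.range col)) :=
              Submodule.finrank_mono hle
          _ = _ := by rw [hfull]; rfl
      omega
    have heq : S = Submodule.span ℝ (Set.range col) := by
      apply Submodule.eq_of_le_of_finrank_le hle
      rw [hrg, hfull]
      rw [← Matrix.rank, hrk2]
    intro β
    have : col β ∈ S := by rw [heq]; exact Submodule.subset_span ⟨β, rfl⟩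
    rw [hS] at this
    obtain ⟨cc, hcc⟩ := (Submodule.mem_span_range_iff_exists_fun ℝ).mp this
    refine ⟨cc, fun α => ?_⟩
    have := congrFun hcc α
    simp only [Finset.sum_apply, Pi.smul_apply, Function.comp_apply, smul_eq_mul] at this
    exact this.symm
  choose c hc using hcex
  -- the Hankel form via c
  have hHc : ∀ α β : ↥(plusSet B),
      σ (monomial ((α : Fin n →₀ ℕ) + (β : Fin n →₀ ℕ)) 1)
        = c α ⬝ᵥ hMat σ B B *ᵥ c β := by
    intro α β
    calc σ (monomial ((α : Fin n →₀ ℕ) + (β : Fin n →₀ ℕ)) 1)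
        = σ (monomial ((β : Fin n →₀ ℕ) + (α : Fin n →₀ ℕ)) 1) := by rw [add_comm]
      _ = ∑ b : ↥B, c α b * σ (monomial ((β : Fin n →₀ ℕ) + (b : Fin n →₀ ℕ)) 1) := hc α β
      _ = ∑ b : ↥B, c α b * σ (monomial ((b : Fin n →₀ ℕ) + (β : Fin n →₀ ℕ)) 1) := by
          apply Finset.sum_congr rfl; intro b _
          rw [add_comm ((β : Fin n →₀ ℕ))]
      _ = c α ⬝ᵥ hMat σ B B *ᵥ c β := by rw [hHmul' c hc β]; rfl
  -- symmetry of H * N i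
  have hHNsym : ∀ i, (hMat σ B B * NN c i)ᵀ = hMat σ B B * NN c i := by
    intro i
    rw [hHN' c hc i]
    ext a b
    simp only [Matrix.transpose_apply, Matrix.of_apply]
    have h9 : (b : Fin n →₀ ℕ) + (a : Fin n →₀ ℕ) + Finsupp.single i 1
        = (a : Fin n →₀ ℕ) + (b : Fin n →₀ ℕ) + Finsupp.single i 1 := by abel
    rw [h9]
  have hsymB : ∀ (i : Fin n) (u v : ↥B → ℝ),
      (NN c i *ᵥ u) ⬝ᵥ hMat σ B B *ᵥ v = u ⬝ᵥ hMat σ B B *ᵥ (NN c i *ᵥ v) :=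
    fun i => symB _ _ hHsymT (hHNsym i)
  -- spectral decomposition of the starting vector e₀
  obtain ⟨f, heig, hsum⟩ := eigdecomp (hMat σ B B) hPD (NN c) hHsymT hHNsym
    (hNcomm' c hc huniq) (Pi.single (⟨0, hB.1⟩ : ↥B) 1)
  -- expansion of the columns in joint eigenvectors
  have hexp := expandc' c hc huniq hB f heig hsum
  -- orthogonality
  have horth : ∀ χ ∈ f.support, ∀ χ' ∈ f.support, χ ≠ χ' →
      f χ ⬝ᵥ hMat σ B B *ᵥ f χ' = 0 := by
    intro χ _ χ' _ hne
    exact orthog (hMat σ B B) (NN c) hsymB (f χ) (f χ') χ χ'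
      (fun i => heig χ i) (fun i => heig χ' i) hne
  -- the quadrature identity on B⁺·B⁺
  have hform : ∀ α β : ↥(plusSet B),
      σ (monomial ((α : Fin n →₀ ℕ) + (β : Fin n →₀ ℕ)) 1)
        = ∑ χ ∈ f.support, (∏ i, χ i ^ (α : Fin n →₀ ℕ) i) * (∏ i, χ i ^ (β : Fin n →₀ ℕ) i)
            * (f χ ⬝ᵥ hMat σ B B *ᵥ f χ) := by
    intro α β
    rw [hHc α β, hexp α, hexp β]
    exact bilexp (hMat σ B B) f.support (fun χ => f χ) _ _ horth
  -- weights are positive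
  have hWpos : ∀ χ ∈ f.support, 0 < f χ ⬝ᵥ hMat σ B B *ᵥ f χ := by
    intro χ hχ
    exact hpdbil (f χ) (Finsupp.mem_support_iff.mp hχ)
  -- cardinality of the support equals B.card
  have hcard : f.support.card = B.card := by
    have hle1 : f.support.card ≤ B.card := by
      have := lindep (hMat σ B B) f.support (fun χ => f χ) horth hpdbil
        (fun χ hχ => Finsupp.mem_support_iff.mp hχ)
      simpa [Fintype.card_coe] using this
    have hle2 : B.card ≤ f.support.card := by
      rw [← hrk1]
      apply rankbound (hMat σ B B) f.support
        (Matrix.of fun (χ : ↥f.support) a =>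
          Real.sqrt (f ↑χ ⬝ᵥ hMat σ B B *ᵥ f ↑χ) * ∏ i, (↑χ : Fin n → ℝ) i ^ (a : Fin n →₀ ℕ) i)
      apply factorH (hMat σ B B) f.support _ (fun χ hχ => le_of_lt (hWpos χ hχ))
        (fun χ a => ∏ i, χ i ^ (a : Fin n →₀ ℕ) i)
      intro a b
      exact hform ⟨(a : Fin n →₀ ℕ), memB' a⟩ ⟨(b : Fin n →₀ ℕ), memB' b⟩
    omega
  -- enumerate the points
  have hcard' : Fintype.card ↥f.support = B.card := by rw [Fintype.card_coe, hcard]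
  set e : Fin B.card ≃ ↥f.support := (Fintype.equivFinOfCardEq hcard').symm with he
  refine ⟨fun k => f ↑(e k) ⬝ᵥ hMat σ B B *ᵥ f ↑(e k), fun k => ↑(e k), ?_, ?_⟩
  · intro k
    exact hWpos _ (e k).2
  · intro γ hγ
    simp only [mulSet, Finset.mem_image, Finset.mem_product] at hγ
    obtain ⟨⟨α, β⟩, ⟨hα, hβ⟩, rfl⟩ := hγ
    rw [hform ⟨α, hα⟩ ⟨β, hβ⟩]
    have hsum2 : ∀ g : (Fin n → ℝ) → ℝ,
        ∑ χ ∈ f.support, g χ = ∑ k : Fin B.card, g ↑(e k) := by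
      intro g
      rw [← Finset.sum_coe_sort f.support g]
      exact (Equiv.sum_comp e (fun χ : ↥f.support => g ↑χ)).symm
    rw [hsum2]
    apply Finset.sum_congr rfl
    intro k _
    rw [evalmono, powsplit]
    ring

/-- if `V ⊆ ⟨B⁺·B⁺⟩`, `σ` agrees with `I` on `V`, `H_σ^{B,B}` is positive
semidefinite and `rank H_σ^{B,B} = rank H_σ^{B⁺,B⁺} = |B| = r`, then `I` admits a
cubature formula with `r` positive weights and real points, exact on `V`. -/
theorem stmt7 (n : ℕ) (V : Submodule ℝ (MvPolynomial (Fin n) ℝ)) [FiniteDimensional ℝ V]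
    (I : V →ₗ[ℝ] ℝ) (B : Finset (Fin n →₀ ℕ)) (hB : connectedTo1 B)
    (hV : V ≤ spanMon (mulSet (plusSet B) (plusSet B)))
    (σ : Module.Dual ℝ (MvPolynomial (Fin n) ℝ))
    (hagree : ∀ (v : MvPolynomial (Fin n) ℝ) (hv : v ∈ V), σ v = I ⟨v, hv⟩)
    (hpsd : ∀ p ∈ spanMon B, 0 ≤ σ (p * p))
    (hrk1 : (hMat σ B B).rank = B.card)
    (hrk2 : (hMat σ (plusSet B) (plusSet B)).rank = B.card) :
    ∃ (w : Fin B.card → ℝ) (ζ : Fin B.card → (Fin n → ℝ)),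
      (∀ i, 0 < w i) ∧
      ∀ (v : MvPolynomial (Fin n) ℝ) (hv : v ∈ V),
        I ⟨v, hv⟩ = ∑ i, w i * MvPolynomial.eval (ζ i) v := by
  obtain ⟨w, ζ, hwpos, hq⟩ := key n B hB σ hpsd hrk1 hrk2
  refine ⟨w, ζ, hwpos, ?_⟩
  have hgen : ∀ x ∈ Submodule.span ℝ
      ((fun α => (monomial α (1 : ℝ))) '' ((mulSet (plusSet B) (plusSet B) : Finset _) :
        Set (Fin n →₀ ℕ))),
      σ x = ∑ i, w i * MvPolynomial.eval (ζ i) x := by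
    intro x hx
    induction hx using Submodule.span_induction with
    | mem x hx =>
      obtain ⟨γ, hγ, rfl⟩ := hx
      exact hq γ hγ
    | zero => simp
    | add x y hx hy hpx hpy =>
      rw [map_add, hpx, hpy, ← Finset.sum_add_distrib]
      apply Finset.sum_congr rfl; intro k _
      rw [map_add]
      ring
    | smul a x hx hpx =>
      rw [LinearMap.map_smul, hpx, smul_eq_mul, Finset.mul_sum]
      apply Finset.sum_congr rfl; intro k _
      rw [MvPolynomial.smul_eval]
      ring
  intro v hv
  rw [← hagree v hv]
  exact hgen v (hV hv)
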